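/- Let G be a chordal graph, let X ⊆ V(G) be a clique, and let L₁, …, L_t be the evaporation sequence of G with exception set X, with t ≥ 1. If G − X is connected and X ⊆ N(L_t) (every vertex of X has a neighbor in L_t), then X ∪ L_t is a clique. -/

import Mathlib

/-- A graph is chordal if it contains no induced cycle of length at least 4. -/
def IsChordal {V : Type*} (G : SimpleGraph V) : Prop :=
  ∀ n : ℕ, 4 ≤ n → IsEmpty (SimpleGraph.cycleGraph n ↪g G)

/-- The neighborhood of `v` inside the induced subgraph of `G` on the vertex set `R`. -/
def nbhdIn {V : Type*} (G : SimpleGraph V) (R : Set V) (v : V) : Set V :=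
  {u | u ∈ R ∧ G.Adj u v}

/-- `v` is simplicial in the induced subgraph of `G` on `R`:
its neighborhood there is a clique. -/
def SimplicialIn {V : Type*} (G : SimpleGraph V) (R : Set V) (v : V) : Prop :=
  G.IsClique (nbhdIn G R v)

/-- The set of vertices remaining after `n` steps of the evaporation process of `G` with
exception set `X`: at each step all simplicial vertices of the current induced subgraph that
are not in `X` are removed. -/
def evapR {V : Type*} (G : SimpleGraph V) (X : Set V) : ℕ → Set V
  | 0 => Set.univ
  | n + 1 =>
      evapR G X n \ {v | v ∈ evapR G X n ∧ v ∉ X ∧ SimplicialIn G (evapR G X n) v}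

/-- The `i`-th set `L_i` of the evaporation sequence (for `i ≥ 1`): the vertices removed at
step `i` of the evaporation process. -/
def evapLayer {V : Type*} (G : SimpleGraph V) (X : Set V) (i : ℕ) : Set V :=
  evapR G X (i - 1) \ evapR G X i

/-- The evaporation time of `G` with exception set `X`: the length `t` of the evaporation
sequence, i.e. the least `t` with `evapR G X t = X`. -/
noncomputable def evapTime {V : Type*} (G : SimpleGraph V) (X : Set V) : ℕ :=
  sInf {t | evapR G X t = X}

/-- The evaporation time of a vertex subset `S`: the largest index `i` such that
`L_i ∩ S ≠ ∅`. -/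
noncomputable def evapTimeOf {V : Type*} (G : SimpleGraph V) (X S : Set V) : ℕ :=
  sSup {i | (evapLayer G X i ∩ S).Nonempty}

/-- `C` is a connected component of the induced subgraph of `G` on `S`:
a maximal subset of `S` inducing a connected subgraph. -/
def IsCompOf {V : Type*} (G : SimpleGraph V) (S C : Set V) : Prop :=
  C.Nonempty ∧ C ⊆ S ∧ (G.induce C).Connected ∧
    ∀ D, C ⊆ D → D ⊆ S → (G.induce D).Connected → D = C

/-- The open neighborhood `N(S)` of a set of vertices. -/
def setNbhd {V : Type*} (G : SimpleGraph V) (S : Set V) : Set V :=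
  {v | v ∉ S ∧ ∃ u ∈ S, G.Adj u v}

section Aux

variable {V : Type*}

lemma evapR_zero' (G : SimpleGraph V) (X : Set V) : evapR G X 0 = Set.univ := rfl

lemma evapR_succ' (G : SimpleGraph V) (X : Set V) (n : ℕ) :
    evapR G X (n + 1) =
      evapR G X n \ {v | v ∈ evapR G X n ∧ v ∉ X ∧ SimplicialIn G (evapR G X n) v} := rfl

lemma evapR_succ_subset (G : SimpleGraph V) (X : Set V) (n : ℕ) :
    evapR G X (n + 1) ⊆ evapR G X n := fun _ hv => hv.1

lemma evapR_antitone (G : SimpleGraph V) (X : Set V) {m n : ℕ} (h : m ≤ n) :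
    evapR G X n ⊆ evapR G X m := by
  induction h with
  | refl => exact fun v hv => hv
  | step _ ih => exact fun v hv => ih (evapR_succ_subset G X _ hv)

lemma X_subset_evapR (G : SimpleGraph V) (X : Set V) (n : ℕ) : X ⊆ evapR G X n := by
  induction n with
  | zero => exact fun x _ => Set.mem_univ x
  | succ n ih => exact fun x hx => ⟨ih hx, fun hc => hc.2.1 hx⟩

/-- The step at which a vertex evaporates. -/
noncomputable def evapLv (G : SimpleGraph V) (X : Set V) (v : V) : ℕ :=
  sInf {n | v ∉ evapR G X n}

lemma mem_evapR_of_lt {G : SimpleGraph V} {X : Set V} {v : V} {n : ℕ}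
    (h : n < evapLv G X v) : v ∈ evapR G X n := by
  by_contra hc
  have h2 : evapLv G X v ≤ n := Nat.sInf_le hc
  omega

variable {G : SimpleGraph V} {X : Set V} {T : ℕ}

lemma evapLv_not_mem (hT : evapR G X T = X) {v : V} (hv : v ∉ X) :
    v ∉ evapR G X (evapLv G X v) :=
  Nat.sInf_mem (s := {n | v ∉ evapR G X n}) ⟨T, by show v ∉ evapR G X T; rw [hT]; exact hv⟩

lemma evapLv_le (hT : evapR G X T = X) {v : V} (hv : v ∉ X) : evapLv G X v ≤ T :=
  Nat.sInf_le (by show v ∉ evapR G X T; rw [hT]; exact hv)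

lemma evapLv_pos (hT : evapR G X T = X) {v : V} (hv : v ∉ X) : 1 ≤ evapLv G X v := by
  rcases Nat.eq_zero_or_pos (evapLv G X v) with h | h
  · have h2 := evapLv_not_mem hT hv
    rw [h] at h2
    exact absurd (Set.mem_univ v) h2
  · exact h

lemma evapLv_simplicial (hT : evapR G X T = X) {v : V} (hv : v ∉ X) :
    SimplicialIn G (evapR G X (evapLv G X v - 1)) v := by
  have h1 := evapLv_pos hT hv
  obtain ⟨k, hk⟩ : ∃ k, evapLv G X v = k + 1 := ⟨evapLv G X v - 1, by omega⟩
  have hmem : v ∈ evapR G X k := mem_evapR_of_lt (by omega)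
  have hnot : v ∉ evapR G X (k + 1) := by rw [← hk]; exact evapLv_not_mem hT hv
  rw [hk]
  simp only [Nat.add_sub_cancel]
  by_contra hs
  rw [evapR_succ'] at hnot
  exact hnot ⟨hmem, fun hc => hs hc.2.2⟩

lemma walk_exists_cons {u w : V} (p : G.Walk u w) (h : u ≠ w) :
    ∃ (c : V) (hadj : G.Adj u c) (q : G.Walk c w), p = SimpleGraph.Walk.cons hadj q := by
  cases p with
  | nil => exact absurd rfl h
  | cons hadj q => exact ⟨_, hadj, q, rfl⟩

open SimpleGraph in
lemma key_walk (hT : evapR G X T = X) :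
    ∀ n (a b : V) (p : G.Walk a b), p.length ≤ n →
      (∀ v ∈ p.support, v ∉ X) → evapLv G X a = T → evapLv G X b = T →
      a = b ∨ G.Adj a b := by
  intro n
  induction n using Nat.strong_induction_on with
  | _ n IH =>
  intro a b p hlen hsup ha hb
  classical
  by_cases hab : a = b
  · exact Or.inl hab
  have hSne : (evapLv G X '' {v | v ∈ p.support}).Nonempty :=
    ⟨evapLv G X a, a, p.start_mem_support, rfl⟩
  obtain ⟨w, hwsup, hwlv⟩ := Nat.sInf_mem hSne
  have hmin : ∀ v ∈ p.support, evapLv G X w ≤ evapLv G X v := by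
    intro v hv
    rw [hwlv]
    exact Nat.sInf_le ⟨v, hv, rfl⟩
  have hwX : w ∉ X := hsup w hwsup
  have hmle : evapLv G X w ≤ T := evapLv_le hT hwX
  have hm1 : 1 ≤ evapLv G X w := evapLv_pos hT hwX
  rcases eq_or_lt_of_le hmle with hmT | hmT
  · -- all support vertices evaporate at step T; they are all simplicial in `evapR (T-1)`
    have hall : ∀ v ∈ p.support, evapLv G X v = T := fun v hv =>
      le_antisymm (evapLv_le hT (hsup v hv)) (by rw [← hmT]; exact hmin v hv)
    cases p with
    | nil => exact absurd rfl hab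
    | cons hac q =>
      rename_i c
      cases q with
      | nil => exact Or.inr hac
      | cons hcd q' =>
        rename_i d
        have hT1 : 1 ≤ T := by omega
        obtain ⟨k, hk⟩ : ∃ k, T = k + 1 := ⟨T - 1, by omega⟩
        have hc_sup : c ∈ (Walk.cons hac (Walk.cons hcd q')).support := by
          simp [Walk.support_cons]
        have hd_sup : d ∈ (Walk.cons hac (Walk.cons hcd q')).support := by
          simp [Walk.support_cons]
        have hsimp := evapLv_simplicial hT (hsup c hc_sup)
        rw [hall c hc_sup, hk] at hsimp
        simp only [Nat.add_sub_cancel] at hsimp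
        have hamem : a ∈ nbhdIn G (evapR G X k) c :=
          ⟨mem_evapR_of_lt (by rw [ha, hk]; omega), hac⟩
        have hdmem : d ∈ nbhdIn G (evapR G X k) c :=
          ⟨mem_evapR_of_lt (by rw [hall d hd_sup, hk]; omega), hcd.symm⟩
        have hlen' : q'.length + 2 ≤ n := by
          simp [Walk.length_cons] at hlen; omega
        have hsup' : ∀ v ∈ q'.support, v ∉ X := fun v hv =>
          hsup v (by simp [Walk.support_cons]; tauto)
        by_cases had : a = d
        · subst had
          exact IH (n - 1) (by omega) a b q' (by omega) hsup' ha hb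
        · have hadj : G.Adj a d := hsimp hamem hdmem had
          exact IH (n - 1) (by omega) a b (Walk.cons hadj q')
            (by rw [Walk.length_cons]; omega)
            (fun v hv => by
              rw [Walk.support_cons, List.mem_cons] at hv
              rcases hv with rfl | hv
              · exact hsup v (Walk.start_mem_support _)
              · exact hsup' v hv) ha hb
  · -- a vertex of minimal level strictly below T: shortcut it
    have hwa : w ≠ a := fun h => by rw [h, ha] at hmT; omega
    have hwb : w ≠ b := fun h => by rw [h, hb] at hmT; omega
    set p1 := p.takeUntil w hwsup with hp1def
    set p2 := p.dropUntil w hwsup with hp2def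
    have hspec : p1.append p2 = p := p.take_spec hwsup
    have hlen12 : p1.length + p2.length = p.length := by
      conv_rhs => rw [← hspec]
      rw [Walk.length_append]
    obtain ⟨u, hwu, r, hru⟩ := walk_exists_cons p1.reverse hwa
    obtain ⟨d, hwd, q2, hq2⟩ := walk_exists_cons p2 hwb
    have hr_sub : ∀ v ∈ r.support, v ∈ p.support := by
      intro v hv
      have h1 : v ∈ p1.reverse.support := by
        rw [hru, Walk.support_cons, List.mem_cons]; exact Or.inr hv
      rw [Walk.support_reverse, List.mem_reverse] at h1
      exact Walk.support_takeUntil_subset p hwsup h1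
    have hq2_sub : ∀ v ∈ q2.support, v ∈ p.support := by
      intro v hv
      have h4 : v ∈ p2.support := by
        rw [hq2, Walk.support_cons, List.mem_cons]; exact Or.inr hv
      exact Walk.support_dropUntil_subset p hwsup h4
    have hu_p : u ∈ p.support := hr_sub u r.start_mem_support
    have hd_p : d ∈ p.support := hq2_sub d q2.start_mem_support
    obtain ⟨k, hk⟩ : ∃ k, evapLv G X w = k + 1 := ⟨evapLv G X w - 1, by omega⟩
    have hsimp := evapLv_simplicial hT hwX
    rw [hk] at hsimp
    simp only [Nat.add_sub_cancel] at hsimp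
    have humem : u ∈ nbhdIn G (evapR G X k) w :=
      ⟨mem_evapR_of_lt (by have h3 := hmin u hu_p; omega), hwu.symm⟩
    have hdmem : d ∈ nbhdIn G (evapR G X k) w :=
      ⟨mem_evapR_of_lt (by have h3 := hmin d hd_p; omega), hwd.symm⟩
    have h1 : p1.length = r.length + 1 := by
      rw [← Walk.length_reverse, hru, Walk.length_cons]
    have h2 : p2.length = q2.length + 1 := by
      rw [hq2, Walk.length_cons]
    by_cases hud : u = d
    · subst hud
      have hWlen : (r.reverse.append q2).length = r.length + q2.length := by
        rw [Walk.length_append, Walk.length_reverse]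
      refine IH (n - 1) (by omega) a b (r.reverse.append q2) (by omega) ?_ ha hb
      intro v hv
      rw [Walk.mem_support_append_iff] at hv
      rcases hv with hv | hv
      · rw [Walk.support_reverse, List.mem_reverse] at hv
        exact hsup v (hr_sub v hv)
      · exact hsup v (hq2_sub v hv)
    · have hadj : G.Adj u d := hsimp humem hdmem hud
      have hWlen : (r.reverse.append (Walk.cons hadj q2)).length
          = r.length + (q2.length + 1) := by
        rw [Walk.length_append, Walk.length_reverse, Walk.length_cons]
      refine IH (n - 1) (by omega) a b (r.reverse.append (Walk.cons hadj q2))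
        (by omega) ?_ ha hb
      intro v hv
      rw [Walk.mem_support_append_iff] at hv
      rcases hv with hv | hv
      · rw [Walk.support_reverse, List.mem_reverse] at hv
        exact hsup v (hr_sub v hv)
      · rw [Walk.support_cons, List.mem_cons] at hv
        rcases hv with rfl | hv
        · exact hsup v hu_p
        · exact hsup v (hq2_sub v hv)

end Aux

/-- Let `G` be chordal, `X` a clique, `L₁, …, L_t` the evaporation sequence
of `G` with exception set `X`, with `t ≥ 1`. If `G − X` is connected and `X ⊆ N(L_t)`,
then `X ∪ L_t` is a clique. -/
theorem clique_X_union_last_layer {V : Type*} [Fintype V] (G : SimpleGraph V) (X : Set V)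
    (hch : IsChordal G) (hX : G.IsClique X) (ht : 1 ≤ evapTime G X)
    (hconn : (G.induce Xᶜ).Connected)
    (hN : X ⊆ setNbhd G (evapLayer G X (evapTime G X))) :
    G.IsClique (X ∪ evapLayer G X (evapTime G X)) := by
  classical
  set T := evapTime G X with hTdef
  have hne : {t | evapR G X t = X}.Nonempty := by
    by_contra h
    rw [Set.not_nonempty_iff_eq_empty] at h
    rw [hTdef, evapTime, h] at ht
    simp at ht
  have hT : evapR G X T = X := Nat.sInf_mem hne
  have hT1 : 1 ≤ T := ht
  have hlayer : ∀ v, v ∈ evapLayer G X T ↔ (v ∉ X ∧ evapLv G X v = T) := by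
    intro v
    constructor
    · rintro ⟨h1, h2⟩
      rw [hT] at h2
      refine ⟨h2, le_antisymm (evapLv_le hT h2) ?_⟩
      by_contra hlt
      push_neg at hlt
      have hmem := evapLv_not_mem hT h2
      exact hmem (evapR_antitone G X (by omega) h1)
    · rintro ⟨h1, h2⟩
      refine ⟨mem_evapR_of_lt (by omega), ?_⟩
      rw [hT]; exact h1
  have hLL : ∀ a b, a ∈ evapLayer G X T → b ∈ evapLayer G X T → a = b ∨ G.Adj a b := by
    intro a b haL hbL
    obtain ⟨haX, halv⟩ := (hlayer a).mp haL
    obtain ⟨hbX, hblv⟩ := (hlayer b).mp hbL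
    have hr : (G.induce Xᶜ).Reachable ⟨a, haX⟩ ⟨b, hbX⟩ := hconn.preconnected _ _
    obtain ⟨q⟩ := hr
    let p : G.Walk a b := q.map (SimpleGraph.Embedding.induce Xᶜ).toHom
    refine key_walk hT p.length a b p le_rfl ?_ halv hblv
    intro v hv
    have hv' : v ∈ (q.map (SimpleGraph.Embedding.induce Xᶜ).toHom).support := hv
    rw [SimpleGraph.Walk.support_map] at hv'
    obtain ⟨z, hz, rfl⟩ := List.mem_map.mp hv'
    exact z.2
  have hXL : ∀ x ∈ X, ∀ y ∈ evapLayer G X T, G.Adj x y := by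
    intro x hxX y hyL
    obtain ⟨_, w, hwL, hwx⟩ := hN hxX
    obtain ⟨hyX, hylv⟩ := (hlayer y).mp hyL
    obtain ⟨hwX, hwlv⟩ := (hlayer w).mp hwL
    rcases hLL y w hyL hwL with rfl | hadj
    · exact hwx.symm
    · have hsimp := evapLv_simplicial hT hwX
      rw [hwlv] at hsimp
      have hxmem : x ∈ nbhdIn G (evapR G X (T - 1)) w :=
        ⟨X_subset_evapR G X _ hxX, hwx.symm⟩
      have hymem : y ∈ nbhdIn G (evapR G X (T - 1)) w :=
        ⟨mem_evapR_of_lt (by omega), hadj⟩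
      exact hsimp hxmem hymem (fun h => hyX (h ▸ hxX))
  intro x hx y hy hxy
  rcases hx with hxX | hxL
  · rcases hy with hyX | hyL
    · exact hX hxX hyX hxy
    · exact hXL x hxX y hyL
  · rcases hy with hyX | hyL
    · exact (hXL y hyX x hxL).symm
    · rcases hLL x y hxL hyL with h | h
      · exact absurd h hxy
      · exact h
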